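/- If x̃ is an operating point for P ∈ ℝⁿ such that x̃ ≥ x entrywise for every operating point x for P (a high-voltage solution), then R(x̃, V_S) ≤ R(x, V_S) for every operating point x for P. If moreover x̃ > x entrywise for every operating point x for P with x ≠ x̃ (a strict high-voltage solution), then R(x̃, V_S) < R(x, V_S) for every operating point x for P with x ≠ x̃, so x̃ is the unique dissipation-minimizing operating point for P. -/

import Mathlib

open Matrix Set

noncomputable section

/-- `A` is irreducible: for every nonempty proper subset `α` of the index set,
the submatrix `A[α, αᶜ]` is not the zero matrix. -/
def IsIrred {k : ℕ} (A : Matrix (Fin k) (Fin k) ℝ) : Prop :=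
  ∀ α : Finset (Fin k), α.Nonempty → α ≠ Finset.univ → ∃ i ∈ α, ∃ j ∈ αᶜ, A i j ≠ 0

/-- `A` is a Z-matrix: off-diagonal entries are nonpositive. -/
def IsZmat {k : ℕ} (A : Matrix (Fin k) (Fin k) ℝ) : Prop :=
  ∀ i j, i ≠ j → A i j ≤ 0

/-- `A` is an M-matrix: a Z-matrix all of whose eigenvalues have nonnegative real part. -/
def IsMmat {k : ℕ} (A : Matrix (Fin k) (Fin k) ℝ) : Prop :=
  IsZmat A ∧ ∀ μ ∈ spectrum ℂ (A.map (Complex.ofReal)), 0 ≤ μ.re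

/-- `A` is a nonsingular M-matrix: a Z-matrix all of whose eigenvalues have positive real part. -/
def IsNonsingMmat {k : ℕ} (A : Matrix (Fin k) (Fin k) ℝ) : Prop :=
  IsZmat A ∧ ∀ μ ∈ spectrum ℂ (A.map (Complex.ofReal)), 0 < μ.re

/-- `P_c(x) = [x] Y (V* − x)`. -/
def Pc {k : ℕ} (Y : Matrix (Fin k) (Fin k) ℝ) (Vs : Fin k → ℝ) (x : Fin k → ℝ) : Fin k → ℝ :=
  Matrix.diagonal x *ᵥ (Y *ᵥ (Vs - x))

/-- Jacobian of `P_c` at `x`: `J(x) = [Y(V* − x)] − [x] Y`. -/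
def Jmat {k : ℕ} (Y : Matrix (Fin k) (Fin k) ℝ) (Vs : Fin k → ℝ) (x : Fin k → ℝ) :
    Matrix (Fin k) (Fin k) ℝ :=
  Matrix.diagonal (Y *ᵥ (Vs - x)) - Matrix.diagonal x * Y

/-- long-term voltage stable operating points. -/
def Dset {k : ℕ} (Y : Matrix (Fin k) (Fin k) ℝ) (Vs : Fin k → ℝ) : Set (Fin k → ℝ) :=
  {x | (∀ i, 0 < x i) ∧ IsUnit (Jmat Y Vs x).det ∧ ∀ i j, (Jmat Y Vs x)⁻¹ i j < 0}

/-- feasible power demands. -/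
def Fset {k : ℕ} (Y : Matrix (Fin k) (Fin k) ℝ) (Vs : Fin k → ℝ) : Set (Fin k → ℝ) :=
  {P | ∃ x, (∀ i, 0 < x i) ∧ Pc Y Vs x = P}

/-- `h(λ) = (1/2)([λ] Y + Y [λ])`. -/
def hmat {k : ℕ} (Y : Matrix (Fin k) (Fin k) ℝ) (l : Fin k → ℝ) : Matrix (Fin k) (Fin k) ℝ :=
  (1/2 : ℝ) • (Matrix.diagonal l * Y + Y * Matrix.diagonal l)

/-- `Λ₁ = {λ ∈ Λ : λ > 0, 1ᵀλ = 1}`. -/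
def Lam1 {k : ℕ} (Y : Matrix (Fin k) (Fin k) ℝ) : Set (Fin k → ℝ) :=
  {l | (hmat Y l).PosDef ∧ (∀ i, 0 < l i) ∧ ∑ i, l i = 1}

/-- `φ(λ) = (1/2) h(λ)⁻¹ [λ] I*` where `I* = Y V*`. -/
def phiv {k : ℕ} (Y : Matrix (Fin k) (Fin k) ℝ) (Vs : Fin k → ℝ) (l : Fin k → ℝ) : Fin k → ℝ :=
  (1/2 : ℝ) • ((hmat Y l)⁻¹ *ᵥ (Matrix.diagonal l *ᵥ (Y *ᵥ Vs)))

/-- `‖x‖_{h(λ)}²  = xᵀ h(λ) x`. -/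
def qnorm {k : ℕ} (Y : Matrix (Fin k) (Fin k) ℝ) (l x : Fin k → ℝ) : ℝ :=
  x ⬝ᵥ (hmat Y l *ᵥ x)

/-- The half-space `H_λ`. -/
def Hset {k : ℕ} (Y : Matrix (Fin k) (Fin k) ℝ) (Vs : Fin k → ℝ) (l : Fin k → ℝ) :
    Set (Fin k → ℝ) :=
  {y | l ⬝ᵥ y ≤ qnorm Y l (phiv Y Vs l)}

/-- The load-load block `Y_LL` of `Y`. -/
def blockLL (n m : ℕ) (Y : Matrix (Fin (n + m)) (Fin (n + m)) ℝ) : Matrix (Fin n) (Fin n) ℝ :=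
  Matrix.of fun i j => Y (Fin.castAdd m i) (Fin.castAdd m j)

/-- The load-source block `Y_LS` of `Y`. -/
def blockLS (n m : ℕ) (Y : Matrix (Fin (n + m)) (Fin (n + m)) ℝ) : Matrix (Fin n) (Fin m) ℝ :=
  Matrix.of fun i j => Y (Fin.castAdd m i) (Fin.natAdd n j)

/-- Total dissipated power `R(V_L, V_S) = (V_L; V_S)ᵀ Y (V_L; V_S)`. -/
def Rdiss (n m : ℕ) (Y : Matrix (Fin (n + m)) (Fin (n + m)) ℝ)
    (VS : Fin m → ℝ) (x : Fin n → ℝ) : ℝ :=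
  Fin.append x VS ⬝ᵥ (Y *ᵥ Fin.append x VS)


lemma rdiss_expand (n m : ℕ) (Y : Matrix (Fin (n + m)) (Fin (n + m)) ℝ) (hsym : Y.IsSymm)
    (VS : Fin m → ℝ) (x : Fin n → ℝ) :
    Rdiss n m Y VS x = x ⬝ᵥ (blockLL n m Y *ᵥ x)
      + 2 * (x ⬝ᵥ (blockLS n m Y *ᵥ VS))
      + (∑ i : Fin m, ∑ j : Fin m, VS i * (Y (Fin.natAdd n i) (Fin.natAdd n j) * VS j)) := by
  have hs : ∀ i j, Y (Fin.natAdd n i) (Fin.castAdd m j) = Y (Fin.castAdd m j) (Fin.natAdd n i) := by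
    intro i j; conv_lhs => rw [← hsym]
    rfl
  simp only [Rdiss, dotProduct, mulVec, blockLL, blockLS, Matrix.of_apply,
    Fin.sum_univ_add, Fin.append_left, Fin.append_right, mul_add, Finset.mul_sum,
    Finset.sum_add_distrib]
  rw [Finset.sum_comm (s := (Finset.univ : Finset (Fin m))) (t := (Finset.univ : Finset (Fin n)))
    (f := fun i j => VS i * (Y (Fin.natAdd n i) (Fin.castAdd m j) * x j))]
  simp only [hs]
  ring_nf
  have e1 : ∀ (i : Fin n) (j : Fin m), VS j * Y (Fin.castAdd m i) (Fin.natAdd n j) * x i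
      = x i * Y (Fin.castAdd m i) (Fin.natAdd n j) * VS j := by intros; ring
  have e2 : ∀ (i : Fin n) (j : Fin m), 2 * x i * Y (Fin.castAdd m i) (Fin.natAdd n j) * VS j
      = x i * Y (Fin.castAdd m i) (Fin.natAdd n j) * VS j
        + x i * Y (Fin.castAdd m i) (Fin.natAdd n j) * VS j := by intros; ring
  simp only [e1, e2, Finset.sum_add_distrib]
  ring_nf
  simp only [Finset.sum_mul]
  ring

lemma quad_op {k : ℕ} (A : Matrix (Fin k) (Fin k) ℝ) (hPD : A.PosDef) (Istar P x : Fin k → ℝ)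
    (hx : Pc A (A⁻¹ *ᵥ Istar) x = P) :
    x ⬝ᵥ (A *ᵥ x) = x ⬝ᵥ Istar - ∑ i, P i := by
  have hdet : IsUnit A.det := isUnit_iff_ne_zero.2 (ne_of_gt hPD.det_pos)
  have hAV : A *ᵥ (A⁻¹ *ᵥ Istar) = Istar := by
    rw [Matrix.mulVec_mulVec, Matrix.mul_nonsing_inv A hdet, Matrix.one_mulVec]
  have hsum : ∑ i, P i = x ⬝ᵥ (A *ᵥ (A⁻¹ *ᵥ Istar - x)) := by
    rw [← hx]
    simp [Pc, dotProduct, Matrix.mulVec_diagonal]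
  rw [Matrix.mulVec_sub, dotProduct_sub, hAV] at hsum
  linarith

theorem stmt_2 (n m : ℕ) (hn : 1 ≤ n) (hm : 1 ≤ m)
    (Y : Matrix (Fin (n + m)) (Fin (n + m)) ℝ)
    (hsym : Y.IsSymm)
    (hZ : IsZmat Y)
    (hrow : Y *ᵥ (fun _ => (1 : ℝ)) = 0)
    (hirr : IsIrred Y)
    (VS : Fin m → ℝ) (hVS : ∀ i, 0 < VS i)
    (hPD : (blockLL n m Y).PosDef)
    (Istar : Fin n → ℝ) (hIstar : Istar = -(blockLS n m Y *ᵥ VS))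
    (VLstar : Fin n → ℝ) (hVLstar : VLstar = (blockLL n m Y)⁻¹ *ᵥ Istar)
    (P : Fin n → ℝ)
    (xt : Fin n → ℝ)
    (hxt : (∀ i, 0 < xt i) ∧ Pc (blockLL n m Y) VLstar xt = P) :
    -- high-voltage solutions are dissipation-minimizing
    ((∀ x, (∀ i, 0 < x i) → Pc (blockLL n m Y) VLstar x = P → ∀ i, x i ≤ xt i) →
      ∀ x, (∀ i, 0 < x i) → Pc (blockLL n m Y) VLstar x = P →
        Rdiss n m Y VS xt ≤ Rdiss n m Y VS x) ∧
    -- strict high-voltage solutions are the unique dissipation-minimizing operating points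
    ((∀ x, (∀ i, 0 < x i) → Pc (blockLL n m Y) VLstar x = P → x ≠ xt → ∀ i, x i < xt i) →
      (∀ x, (∀ i, 0 < x i) → Pc (blockLL n m Y) VLstar x = P → x ≠ xt →
        Rdiss n m Y VS xt < Rdiss n m Y VS x) ∧
      (∀ x, (∀ i, 0 < x i) → Pc (blockLL n m Y) VLstar x = P →
        (∀ z, (∀ i, 0 < z i) → Pc (blockLL n m Y) VLstar z = P →
          Rdiss n m Y VS x ≤ Rdiss n m Y VS z) → x = xt)) := by
  subst hIstar hVLstar
  set A := blockLL n m Y with hA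
  set B := blockLS n m Y with hB
  set Istar : Fin n → ℝ := -(B *ᵥ VS) with hI
  set C : ℝ := ∑ i : Fin m, ∑ j : Fin m, VS i * (Y (Fin.natAdd n i) (Fin.natAdd n j) * VS j)
    with hC
  -- value of Rdiss at any operating point
  have hop : ∀ x : Fin n → ℝ, Pc A (A⁻¹ *ᵥ Istar) x = P →
      Rdiss n m Y VS x = C - (∑ i, P i) - x ⬝ᵥ Istar := by
    intro x hx
    have h1 := rdiss_expand n m Y hsym VS x
    have h2 := quad_op A hPD Istar P x hx
    have h3 : x ⬝ᵥ (B *ᵥ VS) = -(x ⬝ᵥ Istar) := by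
      simp [hI, dotProduct, Finset.sum_neg_distrib]
    rw [h1, h2, h3]
    ring
  -- Istar is entrywise nonnegative
  have hne' : ∀ (i : Fin n) (j : Fin m), (Fin.castAdd m i : Fin (n+m)) ≠ Fin.natAdd n j := by
    intro i j h
    have h1 : (Fin.castAdd m i : Fin (n+m)).val = (Fin.natAdd n j : Fin (n+m)).val := by rw [h]
    simp only [Fin.coe_castAdd, Fin.coe_natAdd] at h1
    omega
  have hBnp : ∀ (i : Fin n) (j : Fin m), B i j ≤ 0 := by
    intro i j
    exact hZ _ _ (hne' i j)
  have hnn : ∀ i, 0 ≤ Istar i := by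
    intro i
    simp only [hI, Pi.neg_apply, Left.nonneg_neg_iff, mulVec, dotProduct]
    exact Finset.sum_nonpos fun j _ =>
      mul_nonpos_of_nonpos_of_nonneg (hBnp i j) (hVS j).le
  -- some entry of Istar is positive
  have hex : ∃ i, 0 < Istar i := by
    classical
    set α : Finset (Fin (n+m)) := Finset.univ.filter (fun k => (k : ℕ) < n) with hα
    have hne0 : α.Nonempty := by
      refine ⟨⟨0, by omega⟩, ?_⟩
      simp [hα]; omega
    have hnu : α ≠ Finset.univ := by
      intro h
      have : (⟨n, by omega⟩ : Fin (n+m)) ∈ α := h ▸ Finset.mem_univ _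
      simp [hα] at this
    obtain ⟨i, hi, j, hj, hYij⟩ := hirr α hne0 hnu
    simp only [hα, Finset.mem_filter, Finset.mem_univ, true_and] at hi
    simp only [hα, Finset.mem_compl, Finset.mem_filter, Finset.mem_univ, true_and,
      not_lt] at hj
    set i' : Fin n := ⟨(i : ℕ), hi⟩ with hi'
    set j' : Fin m := ⟨(j : ℕ) - n, by omega⟩ with hj'
    have hci : (Fin.castAdd m i' : Fin (n+m)) = i := by
      apply Fin.ext; simp [hi']
    have hcj : (Fin.natAdd n j' : Fin (n+m)) = j := by
      apply Fin.ext; simp [hj']; omega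
    have hBij : B i' j' < 0 := by
      have hne : B i' j' ≠ 0 := by
        simpa [hB, blockLS, hci, hcj] using hYij
      exact lt_of_le_of_ne (hBnp i' j') hne
    refine ⟨i', ?_⟩
    simp only [hI, Pi.neg_apply, neg_pos, mulVec, dotProduct]
    have : ∑ j, B i' j * VS j < ∑ _j : Fin m, (0 : ℝ) := by
      refine Finset.sum_lt_sum (fun j _ => mul_nonpos_of_nonpos_of_nonneg (hBnp i' j)
        (hVS j).le) ⟨j', Finset.mem_univ _, mul_neg_of_neg_of_pos hBij (hVS j')⟩
    simpa using this
  constructor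
  · intro hhv x hxpos hxP
    rw [hop x hxP, hop xt hxt.2]
    have : x ⬝ᵥ Istar ≤ xt ⬝ᵥ Istar :=
      Finset.sum_le_sum fun i _ => mul_le_mul_of_nonneg_right (hhv x hxpos hxP i) (hnn i)
    linarith
  · intro hshv
    have hstrict : ∀ x, (∀ i, 0 < x i) → Pc A (A⁻¹ *ᵥ Istar) x = P → x ≠ xt →
        Rdiss n m Y VS xt < Rdiss n m Y VS x := by
      intro x hxpos hxP hne
      rw [hop x hxP, hop xt hxt.2]
      obtain ⟨i0, hi0⟩ := hex
      have : x ⬝ᵥ Istar < xt ⬝ᵥ Istar := by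
        refine Finset.sum_lt_sum (fun i _ => mul_le_mul_of_nonneg_right
          (hshv x hxpos hxP hne i).le (hnn i))
          ⟨i0, Finset.mem_univ _, mul_lt_mul_of_pos_right (hshv x hxpos hxP hne i0) hi0⟩
      linarith
    refine ⟨hstrict, ?_⟩
    intro x hxpos hxP hmin
    by_contra hne
    have h1 := hstrict x hxpos hxP hne
    have h2 := hmin xt hxt.1 hxt.2
    linarith
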